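/- Let μ be a node labeling such that the 1-player game graph G_τ has no loose arcs with respect to μ, and let v be a base node of G_τ. Then the threshold label μ̂(v) — the minimum over all labelings μ̃ ≥ μ(v) at v that are feasible in some cycle dominated by v in G_τ — satisfies μ̂(v) ≥ μ^{G_τ^↑}(v), where μ^{G_τ^↑} is the least simultaneous fixed point of the Lift operators of G_τ above μ. -/

import Mathlib

/-- The `p`-truncation of a label: a leaf of an ordered tree of height `h` is an `h`-tuple
`(ξ_{2h-1}, ξ_{2h-3}, …, ξ_1)` (a list of length `h`, lexicographically ordered); the
`p`-truncation deletes the components with index `< p` (for odd `p`, index `< p`; for even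
`p`, index `≤ p`), i.e. keeps the first `h - p/2` entries; and `⊤|_p = ⊤`. -/
def trunc {M : Type*} (h p : ℕ) (x : WithTop (List M)) : WithTop (List M) :=
  WithTop.map (List.take (h - p / 2)) x

/-- The progress-measure condition for an arc with tail-priority `p`, tail label `x` and
head label `y` (labels in `L(T) ∪ {⊤}` for a tree `T` of height `h`): if `p` is even then
`x|_p ≥ y|_p`; if `p` is odd then `x|_p > y|_p` or both labels are `⊤`.  An arc whose
labels satisfy this condition is *non-violated*. -/
def NV {M : Type*} [LinearOrder M] (h p : ℕ) (x y : WithTop (List M)) : Prop :=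
  if Even p then trunc h p y ≤ trunc h p x
  else trunc h p y < trunc h p x ∨ (x = ⊤ ∧ y = ⊤)

/-- An arc `v → w` is *loose* w.r.t. `μ`: it is non-violated and `μ v` is not the least
label making it non-violated (i.e. some strictly smaller label would also do). -/
def Loose {V M : Type*} [LinearOrder M] (h : ℕ) (π : V → ℕ)
    (μ : V → WithTop (List M)) (v w : V) : Prop :=
  NV h (π v) (μ v) (μ w) ∧ ∃ x < μ v, NV h (π v) x (μ w)

section aux
variable {M : Type*} [LinearOrder M]

private lemma take_le_take {l₁ l₂ : List M} (hlt : List.Lex (· < ·) l₁ l₂) :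
    ∀ n, List.take n l₁ ≤ List.take n l₂ := by
  induction hlt with
  | nil =>
      intro n
      cases n with
      | zero => simp
      | succ n => exact le_of_lt (List.Lex.nil)
  | @cons a l₁ l₂ h ih =>
      intro n
      cases n with
      | zero => simp
      | succ n =>
          simp only [List.take_succ_cons]
          rcases lt_or_eq_of_le (ih n) with h' | h'
          · exact le_of_lt (List.Lex.cons h')
          · rw [h']
  | @rel a b l₁ l₂ hab =>
      intro n
      cases n with
      | zero => simp
      | succ n => exact le_of_lt (List.Lex.rel hab)

private lemma take_mono (n : ℕ) : Monotone (List.take n : List M → List M) := by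
  intro l₁ l₂ h
  rcases lt_or_eq_of_le h with h | h
  · exact take_le_take h n
  · rw [h]

private lemma trunc_mono (h p : ℕ) {x y : WithTop (List M)} (hxy : x ≤ y) :
    trunc h p x ≤ trunc h p y := by
  cases y with
  | top => simp [trunc]
  | coe ly =>
      cases x with
      | top => simp at hxy
      | coe lx =>
          simp only [trunc, WithTop.map_coe, WithTop.coe_le_coe] at *
          exact take_mono _ hxy

private lemma trunc_top (h p : ℕ) : trunc h p (⊤ : WithTop (List M)) = ⊤ := rfl

private lemma trunc_lt_top (h p : ℕ) {x : WithTop (List M)} (hx : x ≠ ⊤) :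
    trunc h p x < ⊤ := by
  cases x with
  | top => exact absurd rfl hx
  | coe lx => exact WithTop.coe_lt_top _

/-- `NV` with top tail always holds. -/
private lemma NV_top (h p : ℕ) (y : WithTop (List M)) : NV h p (⊤ : WithTop (List M)) y := by
  unfold NV
  split
  · exact le_top
  · by_cases hy : y = ⊤
    · exact Or.inr ⟨rfl, hy⟩
    · exact Or.inl (by rw [trunc_top]; exact trunc_lt_top h p hy)

/-- `NV` is monotone in the tail label. -/
private lemma NV_mono_tail (h p : ℕ) {x x' y : WithTop (List M)} (hx : x ≤ x')
    (hnv : NV h p x y) : NV h p x' y := by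
  unfold NV at *
  split at hnv <;> rename_i hp
  · rw [if_pos hp]
    exact le_trans hnv (trunc_mono h p hx)
  · rw [if_neg hp]
    rcases hnv with hlt | ⟨hx1, hy1⟩
    · exact Or.inl (lt_of_lt_of_le hlt (trunc_mono h p hx))
    · exact Or.inr ⟨top_le_iff.mp (hx1 ▸ hx), hy1⟩

/-- `NV` is antitone in the head label. -/
private lemma NV_anti_head (h p : ℕ) {x y y' : WithTop (List M)} (hy : y' ≤ y)
    (hnv : NV h p x y) : NV h p x y' := by
  unfold NV at *
  split at hnv <;> rename_i hp
  · rw [if_pos hp]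
    exact le_trans (trunc_mono h p hy) hnv
  · rw [if_neg hp]
    rcases hnv with hlt | ⟨hx1, hy1⟩
    · exact Or.inl (lt_of_le_of_lt (trunc_mono h p hy) hlt)
    · by_cases hy' : y' = ⊤
      · exact Or.inr ⟨hx1, hy'⟩
      · exact Or.inl (by rw [hx1, trunc_top]; exact trunc_lt_top h p hy')
end aux

/-- Let `(G_τ, π)` be a (sinkless) 1-player game for Even with arc
relation `E`, and let `μ` be a node labeling such that `G_τ` has no loose arcs w.r.t. `μ`.
Let `μ*` be the least simultaneous fixed point of the Lift operators of `G_τ` above `μ`,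
i.e. the pointwise-least labeling `ν ≥ μ` that is feasible in `G_τ` (every node has a
non-violated outgoing arc).  Then for a base node `v` (a node dominating an even cycle of
`G_τ`), the threshold label `μ̂(v)` is at least `μ*(v)`: every labeling `μ̃` that is
feasible in some cycle dominated by `v` and satisfies `μ̃(v) ≥ μ(v)` also satisfies
`μ̃(v) ≥ μ*(v)`. -/
theorem stmt_15 {V M : Type*} [LinearOrder M]
    (d h : ℕ) (hd : d = 2 * h)
    (π : V → ℕ) (hπ : ∀ u, 1 ≤ π u ∧ π u ≤ d)
    (E : V → V → Prop)
    (hsinkless : ∀ u, ∃ u', E u u')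
    (μ : V → WithTop (List M))
    (hnoloose : ∀ v w, E v w → ¬ Loose h π μ v w)
    (μstar : V → WithTop (List M))
    (hstar : IsLeast
      {ν : V → WithTop (List M) | μ ≤ ν ∧ ∀ u, ∃ u', E u u' ∧ NV h (π u) (ν u) (ν u')}
      μstar)
    (v : V)
    (hbase : ∃ (n : ℕ) (c : Fin (n + 1) → V), (∀ i, E (c i) (c (i + 1))) ∧
      (∃ i, c i = v) ∧ (∀ i, π (c i) ≤ π v) ∧ Even (π v)) :
    ∀ (n : ℕ) (c : Fin (n + 1) → V) (μtil : V → WithTop (List M)),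
      (∀ i, E (c i) (c (i + 1))) →
      (∃ i, c i = v) →
      (∀ i, π (c i) ≤ π v) →
      (∀ i, NV h (π (c i)) (μtil (c i)) (μtil (c (i + 1)))) →
      μ v ≤ μtil v →
      μstar v ≤ μtil v := by
  classical
  intro n c μtil hE hvon hdom hfeas hμv
  obtain ⟨i0, hi0⟩ := hvon
  -- Step lemma: absence of loose arcs propagates `μ ≤ μtil` backwards along cycle arcs.
  have hstep : ∀ i : Fin (n + 1), μ (c (i + 1)) ≤ μtil (c (i + 1)) → μ (c i) ≤ μtil (c i) := by
    intro i hhead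
    by_contra hcon
    push_neg at hcon
    apply hnoloose (c i) (c (i + 1)) (hE i)
    have h1 : NV h (π (c i)) (μtil (c i)) (μ (c (i + 1))) :=
      NV_anti_head h _ hhead (hfeas i)
    exact ⟨NV_mono_tail h _ (le_of_lt hcon) h1, ⟨μtil (c i), hcon, h1⟩⟩
  -- Propagate around the cycle from `i0`.
  open Fin.NatCast Fin.CommRing in
  have hall : ∀ k : ℕ, μ (c (i0 - (k : Fin (n + 1)))) ≤ μtil (c (i0 - (k : Fin (n + 1)))) := by
    intro k
    induction k with
    | zero => simpa [hi0] using hμv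
    | succ k ih =>
        have hidx : (i0 - ((k + 1 : ℕ) : Fin (n + 1))) + 1 = i0 - (k : Fin (n + 1)) := by
          push_cast
          ring
        exact hstep _ (by rw [hidx]; exact ih)
  open Fin.NatCast in
  have honcycle : ∀ j : Fin (n + 1), μ (c j) ≤ μtil (c j) := by
    intro j
    have := hall ((i0 - j : Fin (n + 1)) : ℕ)
    rwa [Fin.cast_val_eq_self, sub_sub_cancel] at this
  -- Extend `μtil` by `⊤` outside the cycle.
  set ν : V → WithTop (List M) := fun u => if ∃ i, c i = u then μtil u else ⊤ with hν
  have hνmem : ν ∈ {ν : V → WithTop (List M) |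
      μ ≤ ν ∧ ∀ u, ∃ u', E u u' ∧ NV h (π u) (ν u) (ν u')} := by
    constructor
    · intro u
      by_cases hu : ∃ i, c i = u
      · obtain ⟨i, rfl⟩ := hu
        simpa [hν, exists_apply_eq_apply] using honcycle i
      · simp [hν, hu]
    · intro u
      by_cases hu : ∃ i, c i = u
      · obtain ⟨i, rfl⟩ := hu
        refine ⟨c (i + 1), hE i, ?_⟩
        have h1 : ν (c i) = μtil (c i) := by simp [hν]
        have h2 : ν (c (i + 1)) = μtil (c (i + 1)) := by simp [hν]
        rw [h1, h2]; exact hfeas i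
      · obtain ⟨u', hu'⟩ := hsinkless u
        refine ⟨u', hu', ?_⟩
        have h1 : ν u = ⊤ := by simp [hν, hu]
        rw [h1]; exact NV_top h _ _
  have hle : μstar ≤ ν := hstar.2 hνmem
  have hνv : ν v = μtil v := by
    have : ∃ i, c i = v := ⟨i0, hi0⟩
    simp [hν, this]
  calc μstar v ≤ ν v := hle v
    _ = μtil v := hνv
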